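/- Let H be a real Hilbert space, V a closed vector subspace, and T : H → H a nonexpansive operator with Fix T ∩ V ≠ ∅. Then Fix(P_V ∘ T) = V ∩ Fix T. -/

import Mathlib

open scoped RealInnerProductSpace


theorem stmt18 {H : Type*} [NormedAddCommGroup H] [InnerProductSpace ℝ H] [CompleteSpace H]
    (V : Submodule ℝ H) [CompleteSpace V]
    (T : H → H)
    (hT : ∀ x y : H, ‖T x - T y‖ ≤ ‖x - y‖)
    (hfix : ∃ x : H, T x = x ∧ x ∈ V) :
    ∀ x : H, (V.orthogonalProjectionOnto (T x) : H) = x ↔ (x ∈ V ∧ T x = x) := by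
  obtain ⟨z, hz, hzV⟩ := hfix
  intro x
  constructor
  · intro hx
    have hxV : x ∈ V := hx ▸ (V.orthogonalProjectionOnto (T x)).2
    refine ⟨hxV, ?_⟩
    have horth : ⟪T x - (V.orthogonalProjectionOnto (T x) : H), (V.orthogonalProjectionOnto (T x) : H) - z⟫ = (0:ℝ) :=
      V.starProjection_inner_eq_zero (T x) _
        (Submodule.sub_mem V (V.orthogonalProjectionOnto (T x)).2 hzV)
    rw [hx] at horth
    have hpyth : ‖T x - z‖ ^ 2 = ‖T x - x‖ ^ 2 + ‖x - z‖ ^ 2 := by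
      have hsplit : T x - z = (T x - x) + (x - z) := by abel
      rw [hsplit, norm_add_sq_real, horth]; ring
    have hle : ‖T x - z‖ ≤ ‖x - z‖ := by
      calc ‖T x - z‖ = ‖T x - T z‖ := by rw [hz]
        _ ≤ ‖x - z‖ := hT x z
    have h0 : ‖T x - x‖ = 0 := by
      nlinarith [norm_nonneg (T x - z), norm_nonneg (x - z), norm_nonneg (T x - x)]
    exact sub_eq_zero.mp (norm_eq_zero.mp h0)
  · rintro ⟨hxV, hfx⟩
    rw [hfx]
    exact (V.starProjection_eq_self_iff).mpr hxV
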